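/- For all integers n ≥ 1 and 1 ≤ k ≤ n−1, the Dushnik–Miller dimension of the poset Q^n_{[0,k]} of subsets of {1,…,n} of cardinality at most k, ordered by inclusion, equals N(n, k+1), the minimum cardinality of a (k+1)-suitable set of permutations of {1,…,n}. -/

import Mathlib

/-- The Dushnik-Miller dimension of a poset `P`: the least `d` such that there is
an order embedding of `P` into `ℝ^d` with the componentwise order. -/
noncomputable def dimDM (P : Type*) [PartialOrder P] : ℕ :=
  sInf {d : ℕ | ∃ f : P → (Fin d → ℝ), ∀ a b : P, (f a ≤ f b ↔ a ≤ b)}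

/-- A set `S` of permutations of `{1,…,n}` (modelled as `Fin n`) is `k`-suitable if for
every pointed `k`-subset `(A, a)` there is `σ ∈ S` with `σ b ≤ σ a` for every `b ∈ A`. -/
def IsSuitable (n k : ℕ) (S : Finset (Equiv.Perm (Fin n))) : Prop :=
  ∀ A : Finset (Fin n), A.card = k → ∀ a ∈ A, ∃ σ ∈ S, ∀ b ∈ A, σ b ≤ σ a

/-- `N(n, k)`: the minimum cardinality of a `k`-suitable set of permutations of `{1,…,n}`. -/
noncomputable def suitableNumber (n k : ℕ) : ℕ :=
  sInf {m : ℕ | ∃ S : Finset (Equiv.Perm (Fin n)), IsSuitable n k S ∧ S.card = m}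

lemma exists_perm_mono (n : ℕ) (g : Fin n → ℝ) :
    ∃ σ : Equiv.Perm (Fin n), ∀ x y, g x < g y → σ x < σ y := by
  classical
  set F : Fin n → ℝ ×ₗ Fin n := fun x => toLex (g x, x) with hFdef
  have hFinj : Function.Injective F := by
    intro x y h
    have := congrArg (fun p => (ofLex p).2) h
    simpa [hFdef] using this
  set s : Finset (ℝ ×ₗ Fin n) := Finset.univ.image F with hsdef
  have hs : s.card = n := by
    rw [hsdef, Finset.card_image_of_injective _ hFinj, Finset.card_univ, Fintype.card_fin]
  set e := s.orderIsoOfFin hs with hedef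
  have hmem : ∀ x, F x ∈ s := fun x => Finset.mem_image_of_mem _ (Finset.mem_univ x)
  set τ : Fin n → Fin n := fun x => e.symm ⟨F x, hmem x⟩ with hτdef
  have hτ : Function.Injective τ := by
    intro x y h
    have h2 : (⟨F x, hmem x⟩ : {z // z ∈ s}) = ⟨F y, hmem y⟩ := e.symm.injective h
    exact hFinj (congrArg Subtype.val h2)
  refine ⟨Equiv.ofBijective τ ((Finite.injective_iff_bijective).1 hτ), fun x y hxy => ?_⟩
  have hF' : F x < F y := by
    rw [hFdef]
    exact Prod.Lex.lt_iff.2 (Or.inl hxy)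
  show τ x < τ y
  exact (OrderIso.lt_iff_lt e.symm).2 (Subtype.mk_lt_mk.2 hF')

/-- `dim(Q^n_{[0,k]}) = N(n, k+1)` for `1 ≤ k ≤ n - 1`. -/
theorem dimDM_upToK_eq_suitableNumber (n k : ℕ) (hn : 1 ≤ n) (hk1 : 1 ≤ k)
    (hk2 : k ≤ n - 1) :
    dimDM {A : Finset (Fin n) // A.card ≤ k} = suitableNumber n (k + 1) := by
  classical
  set Q := {A : Finset (Fin n) // A.card ≤ k} with hQ
  set dimSet := {d : ℕ | ∃ f : Q → (Fin d → ℝ), ∀ a b : Q, (f a ≤ f b ↔ a ≤ b)} with hdS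
  set suitSet := {m : ℕ | ∃ S : Finset (Equiv.Perm (Fin n)),
      IsSuitable n (k + 1) S ∧ S.card = m} with hsS
  -- Step A : suitSet ⊆ dimSet
  have stepA : suitSet ⊆ dimSet := by
    rintro m ⟨S, hS, rfl⟩
    set eS : Fin S.card → Equiv.Perm (Fin n) := fun i => (S.equivFin.symm i : _) with heS
    refine ⟨fun A i => ((A.1.sup fun x => ((eS i) x : ℕ) + 1 : ℕ) : ℝ), fun A B => ?_⟩
    constructor
    · intro hle
      by_contra hAB
      have hAB' : ¬ A.1 ⊆ B.1 := hAB
      obtain ⟨a, ha, haB⟩ := Finset.not_subset.1 hAB'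
      have hcard : (insert a B.1).card ≤ k + 1 :=
        le_trans (Finset.card_insert_le _ _) (by have := B.2; omega)
      obtain ⟨D, hsub, hD⟩ := Finset.exists_superset_card_eq hcard
        (by rw [Fintype.card_fin]; omega)
      obtain ⟨σ, hσS, hσ⟩ := hS D hD a (hsub (Finset.mem_insert_self a B.1))
      set i := S.equivFin ⟨σ, hσS⟩ with hi
      have heq : eS i = σ := by simp [heS, hi]
      have h1 : ((σ a : ℕ) + 1) ≤ A.1.sup fun x => ((eS i) x : ℕ) + 1 := by
        rw [heq]; exact Finset.le_sup (f := fun x => ((σ x : ℕ) + 1)) ha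
      have h2 : (B.1.sup fun x => ((eS i) x : ℕ) + 1) ≤ (σ a : ℕ) := by
        rw [heq]
        refine Finset.sup_le fun b hb => ?_
        have hba : b ≠ a := fun h => haB (h ▸ hb)
        have hle' : σ b ≤ σ a := hσ b (hsub (Finset.mem_insert_of_mem hb))
        have hlt : σ b < σ a := lt_of_le_of_ne hle' (fun h => hba (σ.injective h))
        exact Nat.succ_le_of_lt hlt
      have h3 := hle i
      simp only [Nat.cast_le] at h3
      omega
    · intro hab i
      exact Nat.cast_le.2 (Finset.sup_mono hab)
  -- Step B : from an embedding of dimension d, a suitable set of size ≤ d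
  have stepB : ∀ d ∈ dimSet, ∃ m ∈ suitSet, m ≤ d := by
    rintro d ⟨f, hf⟩
    have hsing : ∀ x : Fin n, ({x} : Finset (Fin n)).card ≤ k := by
      intro x; rw [Finset.card_singleton]; exact hk1
    set singQ : Fin n → Q := fun x => ⟨{x}, hsing x⟩ with hsingQ
    set g : Fin d → Fin n → ℝ := fun i x => f (singQ x) i with hg
    choose σ hσ using fun i => exists_perm_mono n (g i)
    set S : Finset (Equiv.Perm (Fin n)) := Finset.univ.image σ with hSdef
    refine ⟨S.card, ⟨S, ?_, rfl⟩, le_trans (Finset.card_image_le)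
      (by rw [Finset.card_univ, Fintype.card_fin])⟩
    intro A hA a ha
    have hB : (A.erase a).card ≤ k := by
      rw [Finset.card_erase_of_mem ha, hA]; omega
    set BQ : Q := ⟨A.erase a, hB⟩ with hBQ
    have hnot : ¬ (singQ a ≤ BQ) := by
      intro h
      have h' : ({a} : Finset (Fin n)) ⊆ A.erase a := h
      exact (Finset.mem_erase.1 (h' (Finset.mem_singleton_self a))).1 rfl
    have hnotf : ¬ (f (singQ a) ≤ f BQ) := fun h => hnot ((hf _ _).1 h)
    obtain ⟨i, hi⟩ := not_forall.1 hnotf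
    have hi' : f BQ i < f (singQ a) i := not_le.1 hi
    refine ⟨σ i, Finset.mem_image_of_mem _ (Finset.mem_univ i), fun b hb => ?_⟩
    by_cases hba : b = a
    · subst hba; exact le_refl _
    · have hbB : b ∈ A.erase a := Finset.mem_erase.2 ⟨hba, hb⟩
      have hsub : singQ b ≤ BQ := by
        show ({b} : Finset (Fin n)) ⊆ A.erase a
        simpa using hbB
      have hle : f (singQ b) ≤ f BQ := (hf _ _).2 hsub
      have hlt : g i b < g i a := lt_of_le_of_lt (hle i) hi'
      exact le_of_lt (hσ i b a hlt)
  -- nonemptiness of suitSet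
  have hne_suit : suitSet.Nonempty := by
    refine ⟨(Finset.univ : Finset (Equiv.Perm (Fin n))).card, Finset.univ, ?_, rfl⟩
    intro A hA a ha
    have hnpos : 0 < n := hn
    refine ⟨Equiv.swap a ⟨n - 1, by omega⟩, Finset.mem_univ _, fun b hb => ?_⟩
    rw [Equiv.swap_apply_left]
    have h1 : ((Equiv.swap a ⟨n - 1, by omega⟩) b : ℕ) < n := Fin.isLt _
    exact Fin.le_def.2 (by simp only []; omega)
  have hne_dim : dimSet.Nonempty := hne_suit.mono stepA
  -- conclude
  apply le_antisymm
  · exact Nat.sInf_le (stepA (Nat.sInf_mem hne_suit))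
  · obtain ⟨m, hm, hmle⟩ := stepB _ (Nat.sInf_mem hne_dim)
    exact le_trans (Nat.sInf_le hm) hmle
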